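/- For all integers m and r with 0 ≤ r and 2r + 2 ≤ m, the sum S(m,r) is odd. -/

import Mathlib

open Finset

/-- `S n r = ∑_{i=r+1}^{⌊n/2⌋} C(n,2i)·C(i−1,r)`. -/
def S (n r : ℕ) : ℕ := ∑ i ∈ Icc (r + 1) (n / 2), n.choose (2 * i) * (i - 1).choose r

def T (n r : ℕ) : ℕ := ∑ i ∈ range (n + 1), n.choose (2 * i) * (i - 1).choose r

lemma sum_range_two_mul {M : Type*} [AddCommMonoid M] (f : ℕ → M) (m : ℕ) :
    ∑ k ∈ range (2*m), f k = ∑ i ∈ range m, (f (2*i) + f (2*i+1)) := by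
  induction m with
  | zero => simp
  | succ m ih =>
    rw [Nat.mul_succ, Finset.sum_range_succ, Finset.sum_range_succ, Finset.sum_range_succ, ← ih]
    rw [add_assoc]

lemma T_eq_S (n r : ℕ) (hr : 1 ≤ r) : T n r = S n r := by
  unfold T S
  symm
  apply Finset.sum_subset
  · intro i hi
    simp only [mem_Icc] at hi
    simp only [mem_range]
    have := Nat.div_le_self n 2
    omega
  · intro i hi hni
    simp only [mem_range] at hi
    simp only [mem_Icc, not_and_or, not_le] at hni
    rcases hni with h1 | h2
    · have : i - 1 < r := by omega
      simp [Nat.choose_eq_zero_of_lt this]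
    · have : n < 2 * i := by
        have := (Nat.div_lt_iff_lt_mul (by norm_num : 0 < 2)).1 h2
        omega
      simp [Nat.choose_eq_zero_of_lt this]

lemma T_zero_eq (n : ℕ) : T n 0 = S n 0 + 1 := by
  unfold T S
  have h0 : (0:ℕ) ∈ range (n+1) := by simp
  rw [← Finset.add_sum_erase _ _ h0]
  simp only [Nat.choose_zero_right, mul_one, mul_zero, Nat.zero_sub, one_mul]
  rw [add_comm]
  congr 1
  symm
  apply Finset.sum_subset
  · intro i hi
    simp only [mem_Icc] at hi
    simp only [mem_erase, mem_range]
    have := Nat.div_le_self n 2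
    omega
  · intro i hi hni
    simp only [mem_erase, mem_range] at hi
    simp only [mem_Icc, not_and_or, not_le] at hni
    rcases hni with h1 | h2
    · omega
    · have : n < 2 * i := by
        have := (Nat.div_lt_iff_lt_mul (by norm_num : 0 < 2)).1 h2
        omega
      simp [Nat.choose_eq_zero_of_lt this]

lemma T_zero_val (n : ℕ) : T (n+1) 0 = 2 ^ n := by
  have key : T (n+1) 0 = ∑ i ∈ range (n+1), n.choose (2*i) + ∑ i ∈ range (n+1), n.choose (2*i+1) := by
    unfold T
    simp only [Nat.choose_zero_right, mul_one]
    rw [Finset.sum_range_succ' (fun i => (n+1).choose (2*i)) (n+1)]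
    simp only [mul_zero, Nat.choose_zero_right]
    have step : ∀ i, (n+1).choose (2*(i+1)) = n.choose (2*i+1) + n.choose (2*i+2) := by
      intro i
      have h : 2*(i+1) = (2*i+1)+1 := by ring
      rw [h, Nat.choose_succ_succ]
    rw [Finset.sum_congr rfl (fun i _ => step i), Finset.sum_add_distrib]
    have e1 : ∑ i ∈ range (n+1), n.choose (2*i+2) + 1 = ∑ i ∈ range (n+1), n.choose (2*i) := by
      rw [Finset.sum_range_succ' (fun i => n.choose (2*i)) n]
      simp only [mul_zero, Nat.choose_zero_right]
      have e2 : ∑ i ∈ range (n+1), n.choose (2*i+2) = ∑ i ∈ range n, n.choose (2*(i+1)) := by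
        rw [Finset.sum_range_succ]
        have hz : n.choose (2*n+2) = 0 := Nat.choose_eq_zero_of_lt (by omega)
        rw [hz, add_zero]
        apply Finset.sum_congr rfl
        intro i _
        rw [show 2*(i+1) = 2*i+2 by ring]
      rw [e2]
    omega
  rw [key, ← Finset.sum_add_distrib, ← sum_range_two_mul (n.choose) (n+1)]
  have ext : ∑ k ∈ range (2*(n+1)), n.choose k = ∑ k ∈ range (n+1), n.choose k := by
    symm
    apply Finset.sum_subset
    · intro k hk; simp only [mem_range] at *; omega
    · intro k hk hnk
      simp only [mem_range] at *
      exact Nat.choose_eq_zero_of_lt (by omega)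
  rw [ext, Nat.sum_range_choose]

lemma two_eq_zero : (2 : ZMod 2) = 0 := by decide

lemma T_rec (n s : ℕ) :
    ((T (n+2) (s+1) : ZMod 2)) = (T n s : ZMod 2) + (if s = 0 then 1 else 0) := by
  have cast_sum : ∀ (m r : ℕ), ((T m r : ZMod 2)) =
      ∑ i ∈ range (m+1), ((m.choose (2*i) : ZMod 2) * ((i-1).choose r : ZMod 2)) := by
    intro m r; unfold T; push_cast; rfl
  rw [cast_sum, cast_sum]
  rw [Finset.sum_range_succ' (fun i => ((n+2).choose (2*i) : ZMod 2) * (((i-1).choose (s+1) : ℕ) : ZMod 2)) (n+2)]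
  simp only [mul_zero, Nat.choose_zero_right, Nat.zero_sub, Nat.cast_one, one_mul,
    Nat.choose_eq_zero_of_lt (Nat.succ_pos s), Nat.cast_zero, add_zero, Nat.add_sub_cancel]
  have pasc : ∀ i : ℕ, ((n+2).choose (2*(i+1)) : ZMod 2)
      = (n.choose (2*i) : ZMod 2) + (n.choose (2*i+2) : ZMod 2) := by
    intro i
    have h1 : 2*(i+1) = (2*i+1)+1 := by ring
    have h2 : (n+2).choose (2*(i+1)) = n.choose (2*i) + 2 * n.choose (2*i+1) + n.choose (2*i+2) := by
      rw [h1, Nat.choose_succ_succ (n+1) (2*i+1), Nat.choose_succ_succ n (2*i),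
        Nat.choose_succ_succ n (2*i+1)]
      ring
    rw [h2]
    push_cast
    rw [two_eq_zero]
    ring
  have step : ∀ i ∈ range (n+2),
      ((n+2).choose (2*(i+1)) : ZMod 2) * ((i.choose (s+1) : ℕ) : ZMod 2)
      = (n.choose (2*i) : ZMod 2) * ((i.choose (s+1) : ℕ) : ZMod 2)
        + (n.choose (2*i+2) : ZMod 2) * ((i.choose (s+1) : ℕ) : ZMod 2) := by
    intro i _
    rw [pasc i, add_mul]
  rw [Finset.sum_congr rfl step, Finset.sum_add_distrib]
  have A1 : ∑ i ∈ range (n+2), (n.choose (2*i) : ZMod 2) * ((i.choose (s+1) : ℕ) : ZMod 2)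
      = ∑ i ∈ range (n+1), (n.choose (2*i+2) : ZMod 2) * ((i.choose s : ℕ) : ZMod 2)
        + ∑ i ∈ range (n+1), (n.choose (2*i+2) : ZMod 2) * ((i.choose (s+1) : ℕ) : ZMod 2) := by
    rw [Finset.sum_range_succ' (fun i => (n.choose (2*i) : ZMod 2) * ((i.choose (s+1) : ℕ) : ZMod 2)) (n+1)]
    simp only [mul_zero, Nat.choose_zero_right, Nat.choose_eq_zero_of_lt (Nat.succ_pos s),
      Nat.cast_zero, zero_mul, mul_zero, add_zero, Nat.cast_one, one_mul]
    rw [← Finset.sum_add_distrib]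
    apply Finset.sum_congr rfl
    intro i _
    rw [show 2*(i+1) = 2*i+2 by ring, Nat.choose_succ_succ i s]
    push_cast
    ring
  rw [A1]
  have A2 : ∑ i ∈ range (n+2), (n.choose (2*i+2) : ZMod 2) * ((i.choose (s+1) : ℕ) : ZMod 2)
      = ∑ i ∈ range (n+1), (n.choose (2*i+2) : ZMod 2) * ((i.choose (s+1) : ℕ) : ZMod 2) := by
    rw [Finset.sum_range_succ]
    have hz : n.choose (2*(n+1)+2) = 0 := Nat.choose_eq_zero_of_lt (by omega)
    rw [hz]
    push_cast
    ring
  rw [A2, add_assoc, CharTwo.add_self_eq_zero, add_zero]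
  -- goal: ∑_{i<n+1} C(n,2i+2)*C(i,s) = ∑_{i<n+1} C(n,2i)*C(i-1,s) + ite
  rw [Finset.sum_range_succ' (fun i => (n.choose (2*i) : ZMod 2) * (((i-1).choose s : ℕ) : ZMod 2)) n]
  simp only [mul_zero, Nat.choose_zero_right, Nat.zero_sub, Nat.cast_one, one_mul, Nat.add_sub_cancel]
  rw [Finset.sum_range_succ]
  have hz : n.choose (2*n+2) = 0 := Nat.choose_eq_zero_of_lt (by omega)
  rw [hz]
  have c0 : ((Nat.choose 0 s : ℕ) : ZMod 2) = if s = 0 then 1 else 0 := by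
    cases s with
    | zero => simp
    | succ s => simp [Nat.choose_eq_zero_of_lt (Nat.succ_pos s)]
  rw [c0]
  have congr1 : ∑ i ∈ range n, (n.choose (2*(i+1)) : ZMod 2) * ((i.choose s : ℕ) : ZMod 2)
      = ∑ i ∈ range n, (n.choose (2*i+2) : ZMod 2) * ((i.choose s : ℕ) : ZMod 2) := by
    apply Finset.sum_congr rfl
    intro i _
    rw [show 2*(i+1) = 2*i+2 by ring]
  rw [congr1]
  push_cast
  rw [add_assoc]
  rw [show ((if s = 0 then (1:ZMod 2) else 0) + (if s = 0 then (1:ZMod 2) else 0)) = 0 from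
    CharTwo.add_self_eq_zero _]
  ring

lemma T_mod (r n : ℕ) : ((T (2*r + 2 + n) r : ZMod 2)) = if r = 0 then 0 else 1 := by
  induction r generalizing n with
  | zero =>
    rw [show 2*0+2+n = (n+1)+1 by ring, T_zero_val, if_pos rfl]
    rw [ZMod.natCast_eq_zero_iff]
    exact dvd_pow_self 2 (Nat.succ_ne_zero n)
  | succ s ih =>
    rw [show 2*(s+1)+2+n = (2*s+2+n)+2 by ring, T_rec (2*s+2+n) s, ih n]
    cases s <;> simp

theorem S_odd (m r : ℕ) (h : 2 * r + 2 ≤ m) : Odd (S m r) := by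
  obtain ⟨n, rfl⟩ : ∃ n, m = 2*r+2+n := ⟨m - (2*r+2), by omega⟩
  cases r with
  | zero =>
    have hT : T (2*0+2+n) 0 = S (2*0+2+n) 0 + 1 := T_zero_eq _
    have hv : T (2*0+2+n) 0 = 2^(n+1) := by
      rw [show 2*0+2+n = (n+1)+1 by ring, T_zero_val]
    have hs : S (2*0+2+n) 0 + 1 = 2^(n+1) := by omega
    have he : Even (2^(n+1) : ℕ) := by
      rw [Nat.even_pow]; exact ⟨even_two, by omega⟩
    rw [← hs] at he
    rwa [Nat.even_add_one, Nat.not_even_iff_odd] at he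
  | succ s =>
    have hT : T (2*(s+1)+2+n) (s+1) = S (2*(s+1)+2+n) (s+1) := T_eq_S _ _ (by omega)
    have hm := T_mod (s+1) n
    rw [hT, if_neg (Nat.succ_ne_zero s)] at hm
    rcases Nat.even_or_odd (S (2*(s+1)+2+n) (s+1)) with he | ho
    · exfalso
      obtain ⟨k, hk⟩ := he
      have hd : (2:ℕ) ∣ S (2*(s+1)+2+n) (s+1) := ⟨k, by omega⟩
      rw [← ZMod.natCast_eq_zero_iff] at hd
      rw [hm] at hd
      exact one_ne_zero hd
    · exact ho
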